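/- The multi-dimensional theta series Θ(z) = Σ_{m∈ℤ^g} exp(½⟨Bm,m⟩ + ⟨m,z⟩) converges absolutely for every z ∈ ℂ^g, provided B is a symmetric complex g×g matrix whose real part is negative definite. -/

import Mathlib

open scoped BigOperators

lemma theta_aux_int_summable (δ c : ℝ) (hδ : 0 < δ) (hc : 0 ≤ c) :
    Summable (fun k : ℤ => Real.exp (-δ * (k : ℝ) ^ 2 + c * |(k : ℝ)|)) := by
  have hnat : Summable (fun n : ℕ => Real.exp (-δ * (n : ℝ) ^ 2 + c * (n : ℝ))) := by
    have hr : Real.exp (-(δ/2)) < 1 := Real.exp_lt_one_iff.mpr (by linarith)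
    refine Summable.of_nonneg_of_le (fun n => (Real.exp_pos _).le) (fun n => ?_)
      ((summable_geometric_of_lt_one (Real.exp_pos _).le hr).mul_left
        (Real.exp (c ^ 2 / (2 * δ))))
    rw [← Real.exp_nat_mul, ← Real.exp_add]
    apply Real.exp_le_exp.2
    have h1 : (n : ℝ) ≤ (n : ℝ) ^ 2 := by
      have := Nat.le_self_pow (two_ne_zero) n
      exact_mod_cast this
    have hK : c ^ 2 = c ^ 2 / (2 * δ) * (2 * δ) := by field_simp
    nlinarith [sq_nonneg (δ * (n : ℝ) - c), sq_nonneg ((n:ℝ)),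
      mul_le_mul_of_nonneg_left h1 (le_of_lt (half_pos hδ))]
  apply Summable.of_nat_of_neg
  · simpa using hnat
  · refine hnat.congr fun n => ?_
    push_cast
    rw [abs_neg, abs_of_nonneg (by positivity : (0:ℝ) ≤ (n:ℝ))]
    ring_nf
  
lemma theta_aux_prod_summable (n : ℕ) (f : ℤ → ℝ) (hf0 : ∀ k, 0 ≤ f k) (hf : Summable f) :
    Summable (fun m : Fin n → ℤ => ∏ i, f (m i)) := by
  induction n with
  | zero => exact Summable.of_finite
  | succ n ih =>
    have h := hf.mul_of_nonneg ih hf0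
      (fun m => Finset.prod_nonneg fun i _ => hf0 _)
    apply ((Fin.consEquiv (fun _ : Fin (n + 1) => ℤ)).summable_iff).mp
    convert h using 1
    funext p
    simp [Fin.prod_univ_succ, Fin.consEquiv]

set_option maxHeartbeats 1000000 in
/-- absolute convergence of the multi-dimensional theta series. -/
theorem theta_series_summable (g : ℕ) (hg : 1 ≤ g)
    (B : Matrix (Fin g) (Fin g) ℂ)
    (hsym : ∀ i j, B i j = B j i)
    (hneg : ∀ x : Fin g → ℝ, x ≠ 0 → ∑ i, ∑ j, (B i j).re * x i * x j < 0)
    (z : Fin g → ℂ) :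
    Summable (fun m : Fin g → ℤ => Complex.exp
      ((1/2) * ∑ i, (∑ j, B i j * (m j : ℂ)) * (m i : ℂ) + ∑ i, (m i : ℂ) * z i)) := by
  haveI : Nonempty (Fin g) := Fin.pos_iff_nonempty.mp hg
  set Q : (Fin g → ℝ) → ℝ := fun x => ∑ i, ∑ j, (B i j).re * x i * x j with hQdef
  have hQcont : Continuous Q := by
    apply continuous_finset_sum
    intro i _
    apply continuous_finset_sum
    intro j _
    exact (continuous_const.mul (continuous_apply i)).mul (continuous_apply j)
  obtain ⟨x₀, hx₀mem, hmax⟩ := (isCompact_sphere (0 : Fin g → ℝ) 1).exists_isMaxOn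
    (NormedSpace.sphere_nonempty.mpr zero_le_one) hQcont.continuousOn
  have hx₀norm : ‖x₀‖ = 1 := by simpa using hx₀mem
  have hx₀ne : x₀ ≠ 0 := by
    intro h; rw [h, norm_zero] at hx₀norm; norm_num at hx₀norm
  set ε := -Q x₀ with hεdef
  have hε : 0 < ε := neg_pos.mpr (hneg x₀ hx₀ne)
  -- Q x ≤ -ε * ‖x‖ ^ 2 for all x
  have hQle : ∀ x : Fin g → ℝ, Q x ≤ -ε * ‖x‖ ^ 2 := by
    intro x
    rcases eq_or_ne x 0 with rfl | hx
    · simp [hQdef]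
    · have hn : 0 < ‖x‖ := norm_pos_iff.mpr hx
      set u : Fin g → ℝ := ‖x‖⁻¹ • x with hu
      have hunorm : ‖u‖ = 1 := by
        rw [hu, norm_smul, norm_inv, norm_norm, inv_mul_cancel₀ hn.ne']
      have hQu : Q u ≤ Q x₀ := hmax (by simpa using hunorm)
      have hhom : Q u = ‖x‖⁻¹ ^ 2 * Q x := by
        simp only [hQdef, hu, Pi.smul_apply, smul_eq_mul, Finset.mul_sum]
        refine Finset.sum_congr rfl fun i _ => Finset.sum_congr rfl fun j _ => by ring
      have : ‖x‖⁻¹ ^ 2 * Q x ≤ -ε := by rw [← hhom]; simpa [hεdef] using hQu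
      calc Q x = ‖x‖ ^ 2 * (‖x‖⁻¹ ^ 2 * Q x) := by
                  field_simp
        _ ≤ ‖x‖ ^ 2 * (-ε) := by
                  exact mul_le_mul_of_nonneg_left this (by positivity)
        _ = -ε * ‖x‖ ^ 2 := by ring
  set c := ∑ i, |(z i).re| with hcdef
  have hc : 0 ≤ c := Finset.sum_nonneg fun i _ => abs_nonneg _
  have hci : ∀ i, |(z i).re| ≤ c := fun i =>
    Finset.single_le_sum (fun j _ => abs_nonneg ((z j).re)) (Finset.mem_univ i)
  set δ := ε / (2 * g) with hδdef
  have hg' : (0:ℝ) < g := by exact_mod_cast hg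
  have hδ : 0 < δ := by positivity
  have hbd := theta_aux_prod_summable g
    (fun k : ℤ => Real.exp (-δ * (k : ℝ) ^ 2 + c * |(k : ℝ)|))
    (fun k => (Real.exp_pos _).le) (theta_aux_int_summable δ c hδ hc)
  apply Summable.of_norm_bounded hbd
  intro m
  set mr : Fin g → ℝ := fun i => (m i : ℝ) with hmr
  rw [Complex.norm_exp, ← Real.exp_sum]
  apply Real.exp_le_exp.2
  have hre : ((1/2 : ℂ) * ∑ i, (∑ j, B i j * (m j : ℂ)) * (m i : ℂ)
      + ∑ i, (m i : ℂ) * z i).re = (1/2) * Q mr + ∑ i, mr i * (z i).re := by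
    simp [hQdef, hmr, Complex.add_re, Complex.mul_re, Complex.re_sum, Complex.im_sum,
      Finset.mul_sum]
    refine Finset.sum_congr rfl fun i _ => ?_
    rw [Finset.sum_mul, Finset.mul_sum]
    exact Finset.sum_congr rfl fun j _ => by ring
  rw [hre]
  -- bound the quadratic part
  have hsumsq : ∑ i, mr i ^ 2 ≤ (g : ℝ) * ‖mr‖ ^ 2 := by
    calc ∑ i, mr i ^ 2 ≤ ∑ _i : Fin g, ‖mr‖ ^ 2 := by
          refine Finset.sum_le_sum fun i _ => ?_
          have := norm_le_pi_norm mr i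
          have h0 : |mr i| ≤ ‖mr‖ := by simpa using this
          calc mr i ^ 2 = |mr i| ^ 2 := (sq_abs _).symm
            _ ≤ ‖mr‖ ^ 2 := by
                exact pow_le_pow_left₀ (abs_nonneg _) h0 2
      _ = (g : ℝ) * ‖mr‖ ^ 2 := by simp [Finset.sum_const, nsmul_eq_mul]
  have hQm : Q mr ≤ -ε * ‖mr‖ ^ 2 := hQle mr
  have hquad : (1/2) * Q mr ≤ -δ * ∑ i, mr i ^ 2 := by
    have h1 : δ * ∑ i, mr i ^ 2 ≤ δ * ((g:ℝ) * ‖mr‖ ^ 2) :=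
      mul_le_mul_of_nonneg_left hsumsq hδ.le
    have h2 : δ * ((g:ℝ) * ‖mr‖ ^ 2) = (ε / 2) * ‖mr‖ ^ 2 := by
      rw [hδdef]; field_simp
    nlinarith [hQm]
  have hlin : ∑ i, mr i * (z i).re ≤ ∑ i, c * |mr i| := by
    refine Finset.sum_le_sum fun i _ => ?_
    calc mr i * (z i).re ≤ |mr i * (z i).re| := le_abs_self _
      _ = |mr i| * |(z i).re| := abs_mul _ _
      _ ≤ |mr i| * c := mul_le_mul_of_nonneg_left (hci i) (abs_nonneg _)
      _ = c * |mr i| := mul_comm _ _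
  calc (1/2) * Q mr + ∑ i, mr i * (z i).re
      ≤ -δ * ∑ i, mr i ^ 2 + ∑ i, c * |mr i| := add_le_add hquad hlin
    _ = ∑ i, (-δ * mr i ^ 2 + c * |mr i|) := by
        rw [Finset.sum_add_distrib, Finset.mul_sum]
    _ = ∑ i, (-δ * ((m i : ℝ)) ^ 2 + c * |(m i : ℝ)|) := rfl
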